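/- If K ≤ Ω(N) (number of prime factors of N with multiplicity) and cos θ_k ≠ cos θ₀ for 1 ≤ k ≤ K, then the optimum of the joint beamforming problem max_{x,w: ‖w‖=1, |x_m−x_n|≥d_min, a(x,θ_k)^H w = 0 ∀k} |a(x,θ₀)^H w|² equals N, the full array gain. -/

import Mathlib

open Complex Finset

lemma aux_exists_t (c : ℝ) (hc : c ≠ 0) (u r : ℝ) (hu0 : 0 ≤ u) (hu1 : u ≤ 1) :
    ∃ t : ℝ, r ≤ t ∧ ∃ L : ℤ, c * t = 2 * Real.pi * (u + L) := by
  have hpi : (0:ℝ) < 2 * Real.pi := by positivity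
  rcases hc.lt_or_gt with h | h
  · -- c < 0
    set L : ℤ := ⌊r * c / (2 * Real.pi)⌋ - 1 with hLdef
    refine ⟨2 * Real.pi * (u + L) / c, ?_, L, by field_simp⟩
    rw [le_div_iff_of_neg h]
    have h1 : (L : ℝ) ≤ r * c / (2 * Real.pi) - 1 := by
      push_cast [hLdef]
      have := Int.floor_le (r * c / (2 * Real.pi))
      linarith
    have h2 : (L:ℝ) + u ≤ r * c / (2 * Real.pi) := by linarith
    calc 2 * Real.pi * (u + L) ≤ 2 * Real.pi * (r * c / (2 * Real.pi)) := by nlinarith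
    _ = r * c := by field_simp
  · -- c > 0
    set L : ℤ := ⌈r * c / (2 * Real.pi)⌉ with hLdef
    refine ⟨2 * Real.pi * (u + L) / c, ?_, L, by field_simp⟩
    rw [le_div_iff₀ h]
    have h1 : r * c / (2 * Real.pi) ≤ (L : ℝ) := Int.le_ceil _
    calc r * c = 2 * Real.pi * (r * c / (2 * Real.pi)) := by field_simp
    _ ≤ 2 * Real.pi * (u + L) := by nlinarith

lemma aux_geom (p : ℕ) (hp : 2 ≤ p) :
    ∑ a : Fin p, Complex.exp (2 * Real.pi * Complex.I / p) ^ (a : ℕ) = 0 := by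
  have hp0 : (p:ℂ) ≠ 0 := Nat.cast_ne_zero.mpr (by omega)
  have hz : Complex.exp (2 * Real.pi * Complex.I / p) ≠ 1 := by
    intro hz1
    obtain ⟨n, hn⟩ := Complex.exp_eq_one_iff.mp hz1
    have hI : (2 * (Real.pi:ℂ) * Complex.I) ≠ 0 := by
      simp [Complex.I_ne_zero, Real.pi_ne_zero]
    have h1 : (1:ℂ) = n * p := by
      field_simp at hn
      refine mul_right_cancel₀ hI ?_
      linear_combination (2 * (Real.pi:ℂ) * Complex.I) * hn
    have h2 : (1:ℤ) = n * p := by exact_mod_cast h1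
    have h3 : (p:ℤ) ∣ 1 := Dvd.intro_left n h2.symm
    have := Int.le_of_dvd one_pos h3
    omega
  rw [Fin.sum_univ_eq_sum_range, _root_.geom_sum_eq hz]
  have hzp : Complex.exp (2 * Real.pi * Complex.I / p) ^ p = 1 := by
    rw [← Complex.exp_nat_mul]
    have : (p:ℂ) * (2 * Real.pi * Complex.I / p) = 2 * Real.pi * Complex.I := by field_simp
    rw [this, Complex.exp_two_pi_mul_I]
  simp [hzp]

lemma aux_exists_x : ∀ (K N : ℕ), K ≤ N.primeFactorsList.length →
    ∀ (c : Fin K → ℝ), (∀ k, c k ≠ 0) → ∀ (dmin : ℝ), 0 < dmin →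
    ∃ x : Fin N → ℝ, (∀ m n : Fin N, m ≠ n → dmin ≤ |x m - x n|) ∧
      ∀ k, ∑ n : Fin N, Complex.exp (Complex.I * ((c k * x n : ℝ) : ℂ)) = 0 := by
  intro K
  induction K with
  | zero =>
    intro N _ c _ dmin hdmin
    refine ⟨fun n => dmin * n, fun m n hmn => ?_, fun k => k.elim0⟩
    have hv : (m:ℤ) ≠ (n:ℤ) := by
      simpa using (Fin.val_ne_iff.mpr hmn)
    have h1 : (1:ℤ) ≤ |(m:ℤ) - (n:ℤ)| := Int.one_le_abs (sub_ne_zero.mpr hv)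
    have h1' : (1:ℝ) ≤ |(m:ℝ) - (n:ℝ)| := by exact_mod_cast (by push_cast at h1 ⊢; exact_mod_cast h1 : (1:ℝ) ≤ |((m:ℤ):ℝ) - ((n:ℤ):ℝ)|)
    have : dmin * ((m:ℝ)) - dmin * n = dmin * ((m:ℝ) - n) := by ring
    rw [this, abs_mul, abs_of_pos hdmin]
    nlinarith
  | succ K ih =>
    intro N hK c hc dmin hdmin
    -- N ≥ 2
    have hN2 : 2 ≤ N := by
      by_contra h
      interval_cases N <;> simp_all
    obtain ⟨n0, rfl⟩ : ∃ n0, N = n0 + 2 := ⟨N - 2, by omega⟩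
    set N := n0 + 2 with hNdef
    set p := N.minFac with hpdef
    have hp : p.Prime := Nat.minFac_prime (by omega)
    set M := N / p with hMdef
    have hKM : K ≤ M.primeFactorsList.length := by
      have := Nat.primeFactorsList_add_two n0
      rw [← hNdef, ← hpdef, ← hMdef] at this
      rw [this] at hK
      simpa using hK
    obtain ⟨x', hx'sp, hx'null⟩ := ih M hKM (fun j => c j.castSucc)
      (fun j => hc j.castSucc) dmin hdmin
    have hNpM : N = p * M := (Nat.mul_div_cancel' (Nat.minFac_dvd N)).symm
    -- bound on spread of x'
    set S : ℝ := 2 * ∑ b : Fin M, |x' b| with hSdef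
    have hSb : ∀ b : Fin M, |x' b| ≤ ∑ b : Fin M, |x' b| :=
      fun b => Finset.single_le_sum (fun i _ => abs_nonneg (x' i)) (mem_univ b)
    have hS : ∀ b b' : Fin M, |x' b - x' b'| ≤ S := by
      intro b b'
      have := abs_sub (x' b) (x' b')
      have h1 := hSb b; have h2 := hSb b'
      rw [hSdef]; have := abs_sub_abs_le_abs_sub (x' b) (x' b')
      calc |x' b - x' b'| ≤ |x' b| + |x' b'| := abs_sub _ _
      _ ≤ 2 * ∑ b : Fin M, |x' b| := by linarith
    have hS0 : 0 ≤ S := by positivity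
    obtain ⟨t, ht, L, hL⟩ := aux_exists_t (c (Fin.last K)) (hc _) (1/p) (S + dmin)
      (by positivity) (by
        rw [div_le_one (by exact_mod_cast hp.pos)]
        exact_mod_cast hp.one_lt.le)
    have ht0 : 0 < t := by linarith
    set e : Fin N ≃ Fin p × Fin M := (finCongr hNpM).trans finProdFinEquiv.symm with hedef
    set x : Fin N → ℝ := fun n => x' (e n).2 + t * ((e n).1 : ℕ) with hxdef
    refine ⟨x, ?_, ?_⟩
    · intro m n hmn
      have hee : e m ≠ e n := fun h => hmn (e.injective h)
      by_cases hfst : (e m).1 = (e n).1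
      · have hsnd : (e m).2 ≠ (e n).2 := by
          intro h; exact hee (Prod.ext hfst h)
        have hxx : x m - x n = x' (e m).2 - x' (e n).2 := by
          rw [hxdef]; simp only [hfst]; ring
        rw [hxx]; exact hx'sp _ _ hsnd
      · have hv : (((e m).1 : ℕ) : ℤ) ≠ (((e n).1 : ℕ) : ℤ) := by
          exact_mod_cast fun h => hfst (Fin.val_injective (by exact_mod_cast h))
        have h1z : (1:ℤ) ≤ |(((e m).1:ℕ):ℤ) - (((e n).1:ℕ):ℤ)| :=
          Int.one_le_abs (sub_ne_zero.mpr hv)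
        have h1 : (1:ℝ) ≤ |(((e m).1:ℕ):ℝ) - (((e n).1:ℕ):ℝ)| := by
          exact_mod_cast h1z
        have h2 : |x' (e m).2 - x' (e n).2| ≤ S := hS _ _
        have hxx : x m - x n = t * ((((e m).1:ℕ):ℝ) - (((e n).1:ℕ):ℝ))
            + (x' (e m).2 - x' (e n).2) := by
          rw [hxdef]; ring
        have key : |t * ((((e m).1:ℕ):ℝ) - (((e n).1:ℕ):ℝ))|
            - |x' (e m).2 - x' (e n).2| ≤ |x m - x n| := by
          rw [hxx]
          set u := t * ((((e m).1:ℕ):ℝ) - (((e n).1:ℕ):ℝ)) with hu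
          set v := x' (e m).2 - x' (e n).2 with hv2
          have h3 : |u| ≤ |u + v| + |v| := by
            calc |u| = |(u + v) + (-v)| := by ring_nf
            _ ≤ |u + v| + |(-v)| := abs_add_le _ _
            _ = |u + v| + |v| := by rw [abs_neg]
          linarith
        have habs : |t * ((((e m).1:ℕ):ℝ) - (((e n).1:ℕ):ℝ))|
            = t * |(((e m).1:ℕ):ℝ) - (((e n).1:ℕ):ℝ)| := by
          rw [abs_mul, abs_of_pos ht0]
        nlinarith
    · intro k
      have hterm : ∀ (r : ℝ) (q : Fin p × Fin M),
          Complex.exp (Complex.I * ((r * (x' q.2 + t * (q.1:ℕ)) : ℝ):ℂ)) =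
            Complex.exp (Complex.I * ((r * t : ℝ):ℂ)) ^ (q.1:ℕ) *
            Complex.exp (Complex.I * ((r * x' q.2 : ℝ):ℂ)) := by
        intro r q
        rw [← Complex.exp_nat_mul, ← Complex.exp_add]
        congr 1
        push_cast
        ring
      have hsum : ∀ (r : ℝ),
          ∑ n : Fin N, Complex.exp (Complex.I * ((r * x n : ℝ):ℂ)) =
          (∑ a : Fin p, Complex.exp (Complex.I * ((r * t : ℝ):ℂ)) ^ (a:ℕ)) *
          (∑ b : Fin M, Complex.exp (Complex.I * ((r * x' b : ℝ):ℂ))) := by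
        intro r
        calc ∑ n : Fin N, Complex.exp (Complex.I * ((r * x n : ℝ):ℂ))
            = ∑ q : Fin p × Fin M,
              Complex.exp (Complex.I * ((r * (x' q.2 + t * (q.1:ℕ)) : ℝ):ℂ)) :=
              (Equiv.sum_comp e (fun q : Fin p × Fin M =>
                Complex.exp (Complex.I * ((r * (x' q.2 + t * (q.1:ℕ)) : ℝ):ℂ)))).symm ▸ rfl
          _ = ∑ q : Fin p × Fin M,
              Complex.exp (Complex.I * ((r * t : ℝ):ℂ)) ^ (q.1:ℕ) *
              Complex.exp (Complex.I * ((r * x' q.2 : ℝ):ℂ)) :=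
              Finset.sum_congr rfl (fun q _ => hterm r q)
          _ = (∑ a : Fin p, Complex.exp (Complex.I * ((r * t : ℝ):ℂ)) ^ (a:ℕ)) *
              (∑ b : Fin M, Complex.exp (Complex.I * ((r * x' b : ℝ):ℂ))) := by
              rw [Fintype.sum_prod_type]
              simp only [← Finset.mul_sum, ← Finset.sum_mul]
      refine Fin.lastCases ?_ ?_ k
      · rw [hsum]
        have hpC : ((p:ℂ)) ≠ 0 := by exact_mod_cast hp.pos.ne'
        have hfac : Complex.exp (Complex.I * ((c (Fin.last K) * t : ℝ):ℂ)) =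
            Complex.exp (2 * Real.pi * Complex.I / p) := by
          rw [hL]
          have harg : Complex.I * (((2 * Real.pi * (1/(p:ℝ) + L)) : ℝ) : ℂ) =
              2 * Real.pi * Complex.I / p + L * (2 * Real.pi * Complex.I) := by
            push_cast
            field_simp
          rw [harg, Complex.exp_add, Complex.exp_int_mul_two_pi_mul_I, mul_one]
        rw [hfac, aux_geom p hp.two_le, zero_mul]
      · intro j
        rw [hsum, hx'null j, mul_zero]

/-- If `K ≤ Ω(N)` (number of prime factors of `N` with multiplicity) and
`cos θ_k ≠ cos θ₀` for all `k`, then the optimum of the joint APV/AWV beamforming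
problem with unit-norm weights, minimum spacing `d_min`, and exact nulls over all
`K` undesired directions equals the full array gain `N`. -/
theorem stmt_18 (N K : ℕ) (hN : 0 < N) (hK : K ≤ N.primeFactorsList.length)
    (lam dmin : ℝ) (hlam : 0 < lam) (hdmin : 0 < dmin)
    (θ₀ : ℝ) (θ : Fin K → ℝ) (hθ : ∀ k, Real.cos (θ k) ≠ Real.cos θ₀) :
    IsGreatest
      { g : ℝ | ∃ (x : Fin N → ℝ) (w : Fin N → ℂ),
          (∑ n, ‖w n‖ ^ 2 = 1) ∧
          (∀ m n : Fin N, m ≠ n → dmin ≤ |x m - x n|) ∧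
          (∀ k : Fin K,
            (∑ n : Fin N,
              (starRingEnd ℂ)
                (Complex.exp (Complex.I * ((2 * Real.pi / lam) * x n * Real.cos (θ k) : ℝ))) *
              w n) = 0) ∧
          g = ‖∑ n : Fin N,
                (starRingEnd ℂ)
                  (Complex.exp (Complex.I * ((2 * Real.pi / lam) * x n * Real.cos θ₀ : ℝ))) *
                w n‖ ^ 2 }
      (N : ℝ) := by
  have hNR : (0:ℝ) < N := by exact_mod_cast hN
  have hs : (0:ℝ) < Real.sqrt N := Real.sqrt_pos.mpr hNR
  have hsC : ((Real.sqrt N : ℝ) : ℂ) ≠ 0 := by exact_mod_cast hs.ne'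
  constructor
  · -- membership: achievability
    set α : ℝ := 2 * Real.pi / lam with hα
    have hα0 : 0 < α := by positivity
    set c : Fin K → ℝ := fun k => α * (Real.cos θ₀ - Real.cos (θ k)) with hc
    have hc0 : ∀ k, c k ≠ 0 := by
      intro k
      have : Real.cos θ₀ - Real.cos (θ k) ≠ 0 := sub_ne_zero.mpr (Ne.symm (hθ k))
      exact mul_ne_zero hα0.ne' this
    obtain ⟨x, hxsp, hxnull⟩ := aux_exists_x K N hK c hc0 dmin hdmin
    set w : Fin N → ℂ := fun n =>
      Complex.exp (Complex.I * ((α * x n * Real.cos θ₀ : ℝ) : ℂ)) / (Real.sqrt N : ℂ) with hw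
    have hnorm1 : ∀ (r : ℝ), ‖Complex.exp (Complex.I * (r : ℂ))‖ = 1 := by
      intro r
      rw [Complex.norm_exp]
      simp
    have hwnorm : ∀ n, ‖w n‖ = 1 / Real.sqrt N := by
      intro n
      rw [hw]
      simp only [norm_div]
      rw [hnorm1]
      simp [Real.sqrt_nonneg, abs_of_nonneg]
    refine ⟨x, w, ?_, hxsp, ?_, ?_⟩
    · simp only [hwnorm]
      rw [Finset.sum_const, card_univ, Fintype.card_fin]
      rw [div_pow, one_pow, Real.sq_sqrt hNR.le]
      field_simp
      rw [nsmul_eq_mul]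
      field_simp
    · intro k
      have hterm : ∀ n, (starRingEnd ℂ)
            (Complex.exp (Complex.I * ((α * x n * Real.cos (θ k) : ℝ) : ℂ))) * w n
          = Complex.exp (Complex.I * ((c k * x n : ℝ) : ℂ)) / (Real.sqrt N : ℂ) := by
        intro n
        rw [hw, ← Complex.exp_conj]
        simp only [map_mul, Complex.conj_I, Complex.conj_ofReal]
        rw [div_eq_mul_inv, ← mul_assoc, ← Complex.exp_add]
        congr 2
        have hr : (c k * x n : ℝ) = α * x n * Real.cos θ₀ - α * x n * Real.cos (θ k) := by
          rw [hc]; ring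
        rw [hr]
        push_cast
        ring
      calc (∑ n : Fin N, (starRingEnd ℂ)
              (Complex.exp (Complex.I * ((α * x n * Real.cos (θ k) : ℝ) : ℂ))) * w n)
          = ∑ n : Fin N, Complex.exp (Complex.I * ((c k * x n : ℝ) : ℂ)) / (Real.sqrt N : ℂ) :=
            Finset.sum_congr rfl (fun n _ => hterm n)
        _ = (∑ n : Fin N, Complex.exp (Complex.I * ((c k * x n : ℝ) : ℂ))) / (Real.sqrt N : ℂ) :=
            (Finset.sum_div _ _ _).symm
        _ = 0 := by rw [hxnull k, zero_div]
    · have hterm : ∀ n : Fin N, (starRingEnd ℂ)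
            (Complex.exp (Complex.I * ((α * x n * Real.cos θ₀ : ℝ) : ℂ))) * w n
          = 1 / (Real.sqrt N : ℂ) := by
        intro n
        rw [hw, ← Complex.exp_conj]
        simp only [map_mul, Complex.conj_I, Complex.conj_ofReal]
        rw [div_eq_mul_inv, ← mul_assoc, ← Complex.exp_add]
        rw [show -Complex.I * ((α * x n * Real.cos θ₀ : ℝ) : ℂ)
            + Complex.I * ((α * x n * Real.cos θ₀ : ℝ) : ℂ) = 0 by ring]
        rw [Complex.exp_zero, one_mul, one_div]
      rw [Finset.sum_congr rfl (fun n _ => hterm n), Finset.sum_const, card_univ,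
        Fintype.card_fin]
      rw [nsmul_eq_mul]
      have : ‖(N : ℂ) * (1 / (Real.sqrt N : ℂ))‖ = Real.sqrt N := by
        rw [norm_mul, norm_div, norm_one]
        rw [show ((N:ℂ)) = ((N:ℝ):ℂ) by push_cast; rfl]
        rw [Complex.norm_real, Complex.norm_real]
        rw [Real.norm_of_nonneg hNR.le, Real.norm_of_nonneg (Real.sqrt_nonneg _),
          mul_one_div, div_eq_iff hs.ne']
        exact (Real.mul_self_sqrt hNR.le).symm
      rw [this, Real.sq_sqrt hNR.le]
  · -- upper bound
    rintro g ⟨x, w, hw1, -, -, hg⟩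
    have hnorm1 : ∀ (r : ℝ), ‖Complex.exp (Complex.I * (r : ℂ))‖ = 1 := by
      intro r
      rw [Complex.norm_exp]
      simp
    have h1 : ‖∑ n : Fin N, (starRingEnd ℂ)
          (Complex.exp (Complex.I * ((2 * Real.pi / lam) * x n * Real.cos θ₀ : ℝ))) *
          w n‖ ≤ ∑ n : Fin N, ‖w n‖ := by
      refine (norm_sum_le _ _).trans ?_
      refine Finset.sum_le_sum (fun n _ => ?_)
      rw [norm_mul, RCLike.norm_conj, hnorm1, one_mul]
    have h2 : (∑ n : Fin N, ‖w n‖) ^ 2 ≤ (N : ℝ) := by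
      have := Finset.sum_mul_sq_le_sq_mul_sq Finset.univ (fun _ : Fin N => (1:ℝ))
        (fun n => ‖w n‖)
      simp only [one_mul, one_pow] at this
      rw [Finset.sum_const, card_univ, Fintype.card_fin, nsmul_eq_mul, mul_one] at this
      calc (∑ n : Fin N, ‖w n‖) ^ 2 ≤ (N : ℝ) * ∑ n : Fin N, ‖w n‖ ^ 2 := this
        _ = N := by rw [hw1, mul_one]
    rw [hg]
    calc ‖∑ n : Fin N, (starRingEnd ℂ)
          (Complex.exp (Complex.I * ((2 * Real.pi / lam) * x n * Real.cos θ₀ : ℝ))) *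
          w n‖ ^ 2 ≤ (∑ n : Fin N, ‖w n‖) ^ 2 := by
          apply pow_le_pow_left₀ (norm_nonneg _) h1
      _ ≤ (N : ℝ) := h2
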